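/- Let X be a pre-Riesz space in which every nonempty totally ordered subset that is bounded from above has a supremum. Assume X is weakly pervasive, i.e. any two elements x, y ∈ X₊ with [0,x] ∩ [0,y] = {0} are disjoint. Then X is a vector lattice: any two elements of X have an infimum (equivalently, a supremum) in X. -/

import Mathlib

open Pointwise

variable {X : Type*} [AddCommGroup X] [PartialOrder X] [IsOrderedAddMonoid X] [Module ℝ X] [PosSMulStrictMono ℝ X]

/-- Two elements of an ordered vector space are disjoint if the sets `{x+y, -x-y}` and
`{x-y, y-x}` have the same set of upper bounds. -/
def UDisjoint (x y : X) : Prop :=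
  upperBounds ({x + y, -x - y} : Set X) = upperBounds ({x - y, y - x} : Set X)

/-- The disjoint complement `S^⊥` of a set `S`. -/
def dComp (S : Set X) : Set X := {x : X | ∀ s ∈ S, UDisjoint x s}

/-- A band: a set equal to its double disjoint complement. -/
def IsBand (B : Set X) : Prop := B = dComp (dComp B)

/-- A projection band: a band `B` with `B ∩ B^⊥ = {0}` and `B + B^⊥ = X`. -/
def IsProjBand (B : Set X) : Prop :=
  IsBand B ∧ B ∩ dComp B = {0} ∧ ∀ x : X, ∃ b ∈ B, ∃ c ∈ dComp B, x = b + c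

/-- A positive linear operator. -/
def IsPosMap (T : X →ₗ[ℝ] X) : Prop := ∀ x : X, 0 ≤ x → 0 ≤ T x

/-- A band projection: a linear projection whose range is a projection band and whose
kernel is the disjoint complement of the range. -/
def IsBandProj (P : X →ₗ[ℝ] X) : Prop :=
  P ∘ₗ P = P ∧ IsProjBand (Set.range ⇑P) ∧ (LinearMap.ker P : Set X) = dComp (Set.range ⇑P)

/-- A pre-Riesz space: for every nonempty finite `A ⊆ X` and every `x`, if the upper bounds
of `x + A` are contained in the upper bounds of `A`, then `x ≥ 0`. -/
def IsPreRiesz (X : Type*) [AddCommGroup X] [PartialOrder X] [IsOrderedAddMonoid X] [Module ℝ X] [PosSMulStrictMono ℝ X] : Prop :=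
  ∀ (A : Set X) (x : X), A.Finite → A.Nonempty →
    upperBounds ((x + ·) '' A) ⊆ upperBounds A → 0 ≤ x

set_option linter.unusedSectionVars false in
/-- Two disjoint positive elements have infimum `0`. -/
lemma key {x y : X} (hx : 0 ≤ x) (hy : 0 ≤ y) (h : UDisjoint x y) :
    IsGLB ({x, y} : Set X) 0 := by
  constructor
  · rintro z (rfl | rfl) <;> assumption
  · intro z hz
    have hzx : z ≤ x := hz (Set.mem_insert _ _)
    have hzy : z ≤ y := hz (Set.mem_insert_of_mem _ rfl)
    have hmem : x + y - z ∈ upperBounds ({x - y, y - x} : Set X) := by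
      rintro w (rfl | rfl)
      · have h1 : z ≤ y + y := hzy.trans (le_add_of_nonneg_left hy)
        calc x - y = x + y - (y + y) := by abel
          _ ≤ x + y - z := sub_le_sub_left h1 _
      · calc y - x = x + y - (x + x) := by abel
          _ ≤ x + y - z := sub_le_sub_left (hzx.trans (le_add_of_nonneg_left hx)) _
    rw [← h] at hmem
    have := sub_nonneg.2 (hmem (Set.mem_insert _ _))
    simpa using this

/-- A weakly pervasive pre-Riesz space in which every nonempty totally ordered subset that
is bounded above has a supremum is a vector lattice: any two elements have an infimum. -/
theorem stmt_19 (hX : IsPreRiesz X)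
    (hchain : ∀ C : Set X, C.Nonempty → IsChain (· ≤ ·) C → BddAbove C → ∃ s, IsLUB C s)
    (hwp : ∀ x y : X, 0 ≤ x → 0 ≤ y →
      Set.Icc (0 : X) x ∩ Set.Icc (0 : X) y = {0} → UDisjoint x y) :
    ∀ x y : X, ∃ a, IsGLB ({x, y} : Set X) a := by
  intro x y
  set L := lowerBounds ({x, y} : Set X) with hL
  -- L is nonempty
  have hLne : L.Nonempty := by
    by_contra hne
    rw [Set.not_nonempty_iff_eq_empty] at hne
    have hub : upperBounds ({-x, -y} : Set X) = ∅ := by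
      rw [Set.eq_empty_iff_forall_notMem]
      intro u hu
      have : -u ∈ L := by
        rintro z (rfl | rfl)
        · have := hu (Set.mem_insert _ _); simpa using neg_le_neg this
        · have := hu (Set.mem_insert_of_mem _ rfl); simpa using neg_le_neg this
      rw [hne] at this; exact this
    have hall : ∀ w : X, 0 ≤ w := by
      intro w
      apply hX {-x, -y} w (Set.toFinite _) ⟨-x, Set.mem_insert _ _⟩
      intro u hu
      exfalso
      have : u - w ∈ upperBounds ({-x, -y} : Set X) := by
        rintro z hz
        have := hu ⟨z, hz, rfl⟩
        simpa [le_sub_iff_add_le, add_comm] using this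
      rw [hub] at this; exact this
    have : (0 : X) ∈ L := by
      rintro z (rfl | rfl) <;> exact hall _
    rw [hne] at this; exact this
  obtain ⟨l0, hl0⟩ := hLne
  -- Zorn's lemma: maximal element of L
  obtain ⟨m, -, hm⟩ := zorn_le_nonempty₀ L (fun c hcL hc w hw => by
    obtain ⟨s, hs⟩ := hchain c ⟨w, hw⟩ hc ⟨x, fun z hz => hcL hz (Set.mem_insert _ _)⟩
    refine ⟨s, ?_, fun z hz => hs.1 hz⟩
    rintro z (rfl | rfl)
    · exact hs.2 fun t ht => hcL ht (Set.mem_insert _ _)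
    · exact hs.2 fun t ht => hcL ht (Set.mem_insert_of_mem _ rfl)) l0 hl0
  have hmx : m ≤ x := hm.1 (Set.mem_insert _ _)
  have hmy : m ≤ y := hm.1 (Set.mem_insert_of_mem _ rfl)
  -- disjointness of x - m and y - m
  have hdd : Set.Icc (0 : X) (x - m) ∩ Set.Icc (0 : X) (y - m) = {0} := by
    ext w
    simp only [Set.mem_inter_iff, Set.mem_Icc, Set.mem_singleton_iff]
    constructor
    · rintro ⟨⟨hw0, hwx⟩, -, hwy⟩
      have hmem : m + w ∈ L := by
        rintro z (rfl | rfl)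
        · have := add_le_add_right hwx m; simpa using this
        · have := add_le_add_right hwy m; simpa using this
      have : m + w ≤ m := hm.2 hmem (le_add_of_nonneg_right hw0)
      have h0 : w ≤ 0 := by simpa using this
      exact le_antisymm h0 hw0
    · rintro rfl
      exact ⟨⟨le_refl _, sub_nonneg.2 hmx⟩, le_refl _, sub_nonneg.2 hmy⟩
  have hud := hwp (x - m) (y - m) (sub_nonneg.2 hmx) (sub_nonneg.2 hmy) hdd
  have hglb := key (sub_nonneg.2 hmx) (sub_nonneg.2 hmy) hud
  refine ⟨m, ?_, ?_⟩
  · exact hm.1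
  · intro z hz
    have h1 : z - m ∈ lowerBounds ({x - m, y - m} : Set X) := by
      rintro w (rfl | rfl)
      · exact sub_le_sub_right (hz (Set.mem_insert _ _)) _
      · exact sub_le_sub_right (hz (Set.mem_insert_of_mem _ rfl)) _
    have := hglb.2 h1
    simpa [sub_nonpos] using this
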